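/- For all n ≥ 1, (M+N+1)^n ≤ p_n(M(M,N)) ≤ 2·(M+N+1)^n, where p_n(M(M,N)) = ∑_{i=0}^{n−1} binom(n,i) N^i p_{n−i}(D_M) + N^n and p_m(D_M) is given by the closed Dyck shift formula. -/

import Mathlib

namespace MotzkinPaper

/-- The closed formula for the number of `m`-periodic points of the Dyck shift `D_M`:
`p_m(D_M) = 2{(M+1)^m − ∑_{i=0}^{⌊m/2⌋} C(m,i)Mⁱ} + [m even]·C(m,m/2)M^{m/2}`. -/
def pDyck (M m : ℕ) : ℤ :=
  2 * (((M : ℤ) + 1) ^ m - ∑ i ∈ Finset.range (m / 2 + 1), (m.choose i : ℤ) * (M : ℤ) ^ i)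
    + if Even m then (m.choose (m / 2) : ℤ) * (M : ℤ) ^ (m / 2) else 0

/-- The number of `n`-periodic points of the Motzkin shift, given by
`p_n(M(M,N)) = ∑_{i=0}^{n−1} C(n,i) Nⁱ p_{n−i}(D_M) + Nⁿ`. -/
def pMotzkin (M N n : ℕ) : ℤ :=
  (∑ i ∈ Finset.range n, (n.choose i : ℤ) * (N : ℤ) ^ i * pDyck M (n - i)) + (N : ℤ) ^ n

end MotzkinPaper

lemma sum_low_le_sum_high (M m : ℕ) (hM : 1 ≤ M) :
    ∑ i ∈ Finset.range (m / 2 + 1), (m.choose i : ℤ) * (M : ℤ) ^ i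
      ≤ ∑ i ∈ Finset.Ico ((m + 1) / 2) (m + 1), (m.choose i : ℤ) * (M : ℤ) ^ i := by
  have hre : ∑ i ∈ Finset.Ico ((m + 1) / 2) (m + 1), (m.choose i : ℤ) * (M : ℤ) ^ i
      = ∑ i ∈ Finset.range (m / 2 + 1), (m.choose (m - i) : ℤ) * (M : ℤ) ^ (m - i) := by
    refine Finset.sum_nbij' (fun j => m - j) (fun i => m - i) ?_ ?_ ?_ ?_ ?_
    · intro a ha; simp only [Finset.mem_Ico] at ha; simp only [Finset.mem_range]; omega
    · intro a ha; simp only [Finset.mem_range] at ha; simp only [Finset.mem_Ico]; omega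
    · intro a ha; simp only [Finset.mem_Ico] at ha; omega
    · intro a ha; simp only [Finset.mem_range] at ha; omega
    · intro a ha; simp only [Finset.mem_Ico] at ha
      have h2 : m - (m - a) = a := by omega
      simp only [h2]
  rw [hre]
  refine Finset.sum_le_sum ?_
  intro i hi
  simp only [Finset.mem_range] at hi
  have him : i ≤ m := by omega
  rw [Nat.choose_symm him]
  have : (M : ℤ) ^ i ≤ (M : ℤ) ^ (m - i) := by
    apply pow_le_pow_right₀ (by exact_mod_cast hM) (by omega)
  exact mul_le_mul_of_nonneg_left this (by positivity)

open MotzkinPaper in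
lemma pDyck_bounds (M m : ℕ) (hM : 1 ≤ M) :
    ((M : ℤ) + 1) ^ m ≤ pDyck M m ∧ pDyck M m ≤ 2 * ((M : ℤ) + 1) ^ m := by
  set k := (m + 1) / 2 with hk
  have hbin : ((M : ℤ) + 1) ^ m = ∑ i ∈ Finset.range (m + 1), (m.choose i : ℤ) * (M : ℤ) ^ i := by
    rw [add_pow]
    refine Finset.sum_congr rfl fun i _ => by ring
  have hsplit : (∑ i ∈ Finset.range k, (m.choose i : ℤ) * (M : ℤ) ^ i)
      + ∑ i ∈ Finset.Ico k (m + 1), (m.choose i : ℤ) * (M : ℤ) ^ i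
      = ∑ i ∈ Finset.range (m + 1), (m.choose i : ℤ) * (M : ℤ) ^ i := by
    rw [Finset.range_eq_Ico, Finset.range_eq_Ico]
    exact Finset.sum_Ico_consecutive (fun i => (m.choose i : ℤ) * (M : ℤ) ^ i) (Nat.zero_le k) (show k ≤ m + 1 by omega)
  have hlow := sum_low_le_sum_high M m hM
  have hS0 : (0:ℤ) ≤ ∑ i ∈ Finset.range (m / 2 + 1), (m.choose i : ℤ) * (M : ℤ) ^ i := by
    apply Finset.sum_nonneg; intro i _; positivity
  have hrk0 : (0:ℤ) ≤ ∑ i ∈ Finset.range k, (m.choose i : ℤ) * (M : ℤ) ^ i := by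
    apply Finset.sum_nonneg; intro i _; positivity
  rcases Nat.even_or_odd m with he | ho
  · obtain ⟨t, ht⟩ := id he
    have hkm : m / 2 = k := by omega
    have hSsucc : ∑ i ∈ Finset.range (m / 2 + 1), (m.choose i : ℤ) * (M : ℤ) ^ i
        = (∑ i ∈ Finset.range k, (m.choose i : ℤ) * (M : ℤ) ^ i)
          + (m.choose (m / 2) : ℤ) * (M : ℤ) ^ (m / 2) := by
      rw [hkm, Finset.sum_range_succ]
    simp only [pDyck, if_pos he]
    constructor <;> linarith [hbin, hsplit, hlow, hSsucc]
  · obtain ⟨t, ht⟩ := ho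
    have hne : ¬ Even m := by rw [Nat.even_iff]; omega
    have hkm : m / 2 + 1 = k := by omega
    simp only [pDyck, if_neg hne]
    rw [hkm] at hS0 hlow ⊢
    constructor <;> linarith [hbin, hsplit, hlow]

open MotzkinPaper in
/-- For all `n ≥ 1`, `(M+N+1)ⁿ ≤ p_n(M(M,N)) ≤ 2·(M+N+1)ⁿ`. -/
theorem motzkin_periodic_point_bounds (M N n : ℕ) (hM : 1 ≤ M) (hN : 1 ≤ N) (hn : 1 ≤ n) :
    ((M : ℤ) + N + 1) ^ n ≤ pMotzkin M N n ∧
      pMotzkin M N n ≤ 2 * ((M : ℤ) + N + 1) ^ n := by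
  have hbin : ((M : ℤ) + N + 1) ^ n
      = (∑ i ∈ Finset.range n, (n.choose i : ℤ) * (N : ℤ) ^ i * ((M : ℤ) + 1) ^ (n - i))
        + (N : ℤ) ^ n := by
    have h1 : (M : ℤ) + N + 1 = (N : ℤ) + ((M : ℤ) + 1) := by ring
    rw [h1, add_pow, Finset.sum_range_succ]
    simp only [Nat.sub_self, pow_zero, Nat.choose_self, Nat.cast_one, mul_one, one_mul]
    congr 1
    refine Finset.sum_congr rfl fun i _ => by ring
  constructor
  · rw [hbin, pMotzkin]
    have : (∑ i ∈ Finset.range n, (n.choose i : ℤ) * (N : ℤ) ^ i * ((M : ℤ) + 1) ^ (n - i))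
        ≤ ∑ i ∈ Finset.range n, (n.choose i : ℤ) * (N : ℤ) ^ i * pDyck M (n - i) := by
      refine Finset.sum_le_sum fun i _ => ?_
      exact mul_le_mul_of_nonneg_left (pDyck_bounds M (n - i) hM).1 (by positivity)
    linarith
  · rw [pMotzkin]
    have h1 : (∑ i ∈ Finset.range n, (n.choose i : ℤ) * (N : ℤ) ^ i * pDyck M (n - i))
        ≤ ∑ i ∈ Finset.range n, (n.choose i : ℤ) * (N : ℤ) ^ i * (2 * ((M : ℤ) + 1) ^ (n - i)) := by
      refine Finset.sum_le_sum fun i _ => ?_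
      exact mul_le_mul_of_nonneg_left (pDyck_bounds M (n - i) hM).2 (by positivity)
    have h2 : ∑ i ∈ Finset.range n, (n.choose i : ℤ) * (N : ℤ) ^ i * (2 * ((M : ℤ) + 1) ^ (n - i))
        = 2 * ∑ i ∈ Finset.range n, (n.choose i : ℤ) * (N : ℤ) ^ i * ((M : ℤ) + 1) ^ (n - i) := by
      rw [Finset.mul_sum]; exact Finset.sum_congr rfl fun i _ => by ring
    have hNn : (0:ℤ) ≤ (N : ℤ) ^ n := by positivity
    nlinarith [hbin]
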